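/- For all finite multisets A, B, C of positive integers, A + C ≤ B + C holds if and only if A ≤ B holds. In particular, the order ≤ is cancellative with respect to multiset union. -/

import Mathlib

/-- `[k] = {1,…,k}` as a finset of positive integers. -/
def bra (k : ℕ) : Finset ℕ+ := (Finset.range k).image (fun i => ⟨i + 1, i.succ_pos⟩)

/-- The domination order on finite multisets of positive integers: `MLE S T` holds iff there
is a submultiset `T'` of `T` that can be matched up with `S` so that each element of `S` is
at most its partner in `T'`. -/
def MLE (S T : Multiset ℕ+) : Prop := ∃ T' ≤ T, Multiset.Rel (· ≤ ·) S T'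

lemma rel_le_refl (C : Multiset ℕ+) : Multiset.Rel (· ≤ ·) C C := by
  induction C using Multiset.induction_on with
  | empty => exact Multiset.Rel.zero
  | cons a s ih => exact Multiset.Rel.cons le_rfl ih

lemma mle_cancel_one (c : ℕ+) (A B : Multiset ℕ+) (h : MLE (c ::ₘ A) (c ::ₘ B)) :
    MLE A B := by
  obtain ⟨T', hT', hrel⟩ := h
  obtain ⟨b, T'', hcb, hArel, rfl⟩ := Multiset.rel_cons_left.mp hrel
  by_cases hc : Multiset.count c (b ::ₘ T'') ≤ Multiset.count c B
  · -- T' ≤ B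
    have hle : b ::ₘ T'' ≤ B := by
      rw [Multiset.le_iff_count] at hT' ⊢
      intro x
      by_cases hx : x = c
      · subst hx; exact hc
      · have := hT' x
        rwa [Multiset.count_cons_of_ne hx] at this
    exact ⟨T'', le_trans (Multiset.le_cons_self _ _) hle, hArel⟩
  · -- c is used in T'
    have hcmem : c ∈ b ::ₘ T'' := by
      by_contra hmem
      exact hc (by simp [Multiset.count_eq_zero_of_notMem hmem])
    have hU : (b ::ₘ T'').erase c ≤ B := by
      rw [Multiset.le_iff_count] at hT' ⊢
      intro x
      have := hT' x
      by_cases hx : x = c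
      · subst hx
        rw [Multiset.count_cons_self] at this
        rw [Multiset.count_erase_self]
        omega
      · rw [Multiset.count_erase_of_ne hx]
        rwa [Multiset.count_cons_of_ne hx] at this
    have hcons : b ::ₘ T'' = c ::ₘ (b ::ₘ T'').erase c := (Multiset.cons_erase hcmem).symm
    rcases Multiset.cons_eq_cons.mp hcons with ⟨hbc, hT⟩ | ⟨hbc, cs, h1, h2⟩
    · -- b = c, so T'' = erase, Rel A T''
      exact ⟨T'', hT ▸ hU, hArel⟩
    · -- T'' = c ::ₘ cs, erase = b ::ₘ cs
      rw [h1] at hArel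
      obtain ⟨a, as, hac, hrel', rfl⟩ := Multiset.rel_cons_right.mp hArel
      refine ⟨b ::ₘ cs, h2 ▸ hU, Multiset.Rel.cons (le_trans hac hcb) hrel'⟩

/-- The order `≤` on finite multisets of positive integers is cancellative with respect to
multiset union: `A + C ≤ B + C` iff `A ≤ B`. -/
theorem stmt_2 (A B C : Multiset ℕ+) : MLE (A + C) (B + C) ↔ MLE A B := by
  constructor
  · intro h
    induction C using Multiset.induction_on with
    | empty => simpa using h
    | cons c s ih =>
      apply ih
      apply mle_cancel_one c
      rw [← Multiset.add_cons, ← Multiset.add_cons]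
      simpa [Multiset.cons_swap] using h
  · rintro ⟨T', hT', hrel⟩
    exact ⟨T' + C, add_le_add_left hT' C, hrel.add (rel_le_refl C)⟩
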